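/- Let G be a finite group, V a normal subgroup of G, and a ∈ G an element such that G = V⟨a⟩ and gcd(|V|, ord(a)) = 1. Suppose v ∈ V has the property that gcd(|V|, ord(av)) = 1. Then v ∈ [V,a], where [V,a] is the subgroup generated by all commutators [u,a] = u⁻¹a⁻¹ua with u ∈ V. -/

import Mathlib

/-- Let `G` be a finite group, `V` a normal subgroup of `G` and `a ∈ G`
with `G = V⟨a⟩` and `gcd(|V|, ord(a)) = 1`. If `v ∈ V` satisfies `gcd(|V|, ord(a*v)) = 1`,
then `v ∈ [V,a]`, the subgroup generated by all commutators `u⁻¹ * a⁻¹ * u * a` with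
`u ∈ V`. -/
theorem mem_commutator_of_coprime_order
    (G : Type*) [Group G] [Finite G] (V : Subgroup G) (hV : V.Normal) (a : G)
    (hgen : V ⊔ Subgroup.zpowers a = ⊤)
    (hcop : Nat.Coprime (Nat.card V) (orderOf a))
    (v : G) (hv : v ∈ V)
    (hav : Nat.Coprime (Nat.card V) (orderOf (a * v))) :
    v ∈ Subgroup.closure {x : G | ∃ u ∈ V, x = u⁻¹ * a⁻¹ * u * a} := by
  set S : Set G := {x : G | ∃ u ∈ V, x = u⁻¹ * a⁻¹ * u * a} with hS
  set W := Subgroup.closure S with hWdef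
  have hgenW : ∀ u ∈ V, u⁻¹ * a⁻¹ * u * a ∈ W :=
    fun u hu => Subgroup.subset_closure ⟨u, hu, rfl⟩
  -- conjugation stability of W
  have hconj : ∀ g : G, (∀ x ∈ S, g * x * g⁻¹ ∈ W) → ∀ x ∈ W, g * x * g⁻¹ ∈ W := by
    intro g hg x hx
    induction hx using Subgroup.closure_induction with
    | mem y hy => exact hg y hy
    | one => simpa using Subgroup.one_mem W
    | mul y z hy hz ihy ihz =>
        have : g * (y * z) * g⁻¹ = (g * y * g⁻¹) * (g * z * g⁻¹) := by group
        rw [this]; exact Subgroup.mul_mem _ ihy ihz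
    | inv y hy ihy =>
        have : g * y⁻¹ * g⁻¹ = (g * y * g⁻¹)⁻¹ := by group
        rw [this]; exact Subgroup.inv_mem _ ihy
  have hnzer : ∀ g : G, (∀ x ∈ S, g * x * g⁻¹ ∈ W) → (∀ x ∈ S, g⁻¹ * x * g ∈ W) →
      g ∈ Subgroup.normalizer (W : Set G) := by
    intro g h1 h2
    have H1 := hconj g h1
    have H2 : ∀ x ∈ W, g⁻¹ * x * g ∈ W := by
      have := hconj g⁻¹ (by simpa using h2)
      simpa using this
    rw [Subgroup.mem_normalizer_iff]
    intro h
    constructor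
    · exact fun hh => H1 h hh
    · intro hh
      have := H2 _ hh
      have e : g⁻¹ * (g * h * g⁻¹) * g = h := by group
      rwa [e] at this
  -- a normalizes W
  have haN : a ∈ Subgroup.normalizer (W : Set G) := by
    refine hnzer a ?_ ?_
    · rintro x ⟨u, hu, rfl⟩
      have e : a * (u⁻¹ * a⁻¹ * u * a) * a⁻¹ =
          (a * u * a⁻¹)⁻¹ * a⁻¹ * (a * u * a⁻¹) * a := by group
      rw [e]
      exact hgenW _ (hV.conj_mem u hu a)
    · rintro x ⟨u, hu, rfl⟩
      have e : a⁻¹ * (u⁻¹ * a⁻¹ * u * a) * a =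
          (a⁻¹ * u * a)⁻¹ * a⁻¹ * (a⁻¹ * u * a) * a := by group
      rw [e]
      have : a⁻¹ * u * a ∈ V := by simpa using hV.conj_mem u hu a⁻¹
      exact hgenW _ this
  -- V normalizes W
  have hVN : V ≤ Subgroup.normalizer (W : Set G) := by
    intro w hw
    refine hnzer w ?_ ?_
    · rintro x ⟨u, hu, rfl⟩
      have e : w * (u⁻¹ * a⁻¹ * u * a) * w⁻¹ =
          ((u * w⁻¹)⁻¹ * a⁻¹ * (u * w⁻¹) * a) * ((w⁻¹)⁻¹ * a⁻¹ * w⁻¹ * a)⁻¹ := by group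
      rw [e]
      exact Subgroup.mul_mem _ (hgenW _ (V.mul_mem hu (V.inv_mem hw)))
        (Subgroup.inv_mem _ (hgenW _ (V.inv_mem hw)))
    · rintro x ⟨u, hu, rfl⟩
      have e : w⁻¹ * (u⁻¹ * a⁻¹ * u * a) * w =
          ((u * w)⁻¹ * a⁻¹ * (u * w) * a) * (w⁻¹ * a⁻¹ * w * a)⁻¹ := by group
      rw [e]
      exact Subgroup.mul_mem _ (hgenW _ (V.mul_mem hu hw))
        (Subgroup.inv_mem _ (hgenW _ hw))
  have htop : Subgroup.normalizer (W : Set G) = ⊤ := by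
    rw [eq_top_iff, ← hgen]
    exact sup_le hVN ((Subgroup.zpowers_le).mpr haN)
  haveI hWn : W.Normal := Subgroup.normalizer_eq_top_iff.mp htop
  -- pass to the quotient
  set π : G →* G ⧸ W := QuotientGroup.mk' W with hπ
  have hcomm : Commute (π a) (π v) := by
    have h1 : π (v⁻¹ * a⁻¹ * v * a) = 1 :=
      (QuotientGroup.eq_one_iff _).mpr (hgenW v hv)
    have h2 : (π v)⁻¹ * (π a)⁻¹ * π v * π a = 1 := by
      simpa [map_mul, map_inv] using h1
    have h3 : π a * π v = π v * π a := by
      have := congrArg (fun t => π a * (π v * t)) h2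
      simpa [mul_assoc] using this.symm
    exact h3
  have e2 : (π a) ^ orderOf a = 1 := by
    rw [← map_pow, pow_orderOf_eq_one, map_one]
  have e1 : (π a) ^ (orderOf a * orderOf (a * v)) * (π v) ^ (orderOf a * orderOf (a * v)) = 1 := by
    rw [← hcomm.mul_pow, ← map_mul, ← map_pow, mul_comm (orderOf a), pow_mul,
      pow_orderOf_eq_one, one_pow, map_one]
  have hvN : (π v) ^ (orderOf a * orderOf (a * v)) = 1 := by
    have : (π a) ^ (orderOf a * orderOf (a * v)) = 1 := by
      rw [pow_mul, e2, one_pow]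
    rwa [this, one_mul] at e1
  have hvcard : (π v) ^ (Nat.card V) = 1 := by
    have : (⟨v, hv⟩ : V) ^ (Nat.card V) = 1 := pow_card_eq_one'
    have hg : v ^ (Nat.card V) = 1 := by
      have h4 := congrArg (fun x : V => (x : G)) this
      push_cast at h4
      exact h4
    rw [← map_pow, hg, map_one]
  have hd1 : orderOf (π v) ∣ Nat.card V := orderOf_dvd_of_pow_eq_one hvcard
  have hd2 : orderOf (π v) ∣ orderOf a * orderOf (a * v) := orderOf_dvd_of_pow_eq_one hvN
  have hcop' : Nat.Coprime (Nat.card V) (orderOf a * orderOf (a * v)) :=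
    Nat.Coprime.mul_right hcop hav
  have : orderOf (π v) = 1 := by
    have := Nat.dvd_gcd hd1 hd2
    rwa [Nat.Coprime.gcd_eq_one hcop', Nat.dvd_one] at this
  have hπv : π v = 1 := orderOf_eq_one_iff.mp this
  exact (QuotientGroup.eq_one_iff v).mp hπv
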